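/- Let g : ℝ → ℝ be differentiable and non-negative, let c ≥ 0 and T > 0. Suppose |g'(t)| ≤ c·√(g(0))·g(t) for all t with |t| ≤ T. Then for all t with |t| ≤ T, one has g(0)·exp(−c|t|√(g(0))) ≤ g(t) ≤ g(0)·exp(c|t|√(g(0))). -/

import Mathlib

/-- Proposition (bach-second-derivative): second-derivative control for
pseudo self-concordant functions along a line. -/
theorem stmt_1 (g : ℝ → ℝ) (c T : ℝ) (hg : Differentiable ℝ g)
    (hpos : ∀ t, 0 ≤ g t) (hc : 0 ≤ c) (hT : 0 < T)
    (hsc : ∀ t : ℝ, |t| ≤ T → |deriv g t| ≤ c * Real.sqrt (g 0) * g t) :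
    ∀ t : ℝ, |t| ≤ T →
      g 0 * Real.exp (-(c * |t| * Real.sqrt (g 0))) ≤ g t ∧
      g t ≤ g 0 * Real.exp (c * |t| * Real.sqrt (g 0)) := by
  set K := c * Real.sqrt (g 0) with hKdef
  have hK0 : 0 ≤ K := mul_nonneg hc (Real.sqrt_nonneg _)
  have hb : ∀ s ∈ Set.Icc (-T) T, |deriv g s| ≤ K * g s := by
    intro s hs
    exact hsc s (abs_le.mpr ⟨hs.1, hs.2⟩)
  have hD : ∀ (a : ℝ) (s : ℝ),
      HasDerivAt (fun x => g x * Real.exp (a * x))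
        ((deriv g s + a * g s) * Real.exp (a * s)) s := by
    intro a s
    have h1 : HasDerivAt (fun x : ℝ => a * x) a s := by
      simpa using (hasDerivAt_id s).const_mul a
    have h2 := h1.exp
    have : HasDerivAt (fun x => g x * Real.exp (a * x))
        (deriv g s * Real.exp (a * s) + g s * (Real.exp (a * s) * a)) s :=
      (hg s).hasDerivAt.fun_mul h2
    convert this using 1
    ring
  have hIcc : Set.Icc (-T) T ⊆ Set.Icc (-T) T := le_refl _
  have hint : interior (Set.Icc (-T) T) ⊆ Set.Icc (-T) T := interior_subset
  -- v(s) = g s * exp(K s) is monotone on [-T, T]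
  have hv : MonotoneOn (fun x => g x * Real.exp (K * x)) (Set.Icc (-T) T) := by
    apply monotoneOn_of_deriv_nonneg (convex_Icc _ _)
    · exact (hg.continuous.mul (Real.continuous_exp.comp (continuous_const.mul continuous_id))).continuousOn
    · intro s hs
      exact ((hD K s).differentiableAt).differentiableWithinAt
    · intro s hs
      rw [(hD K s).deriv]
      have hbs := hb s (hint hs)
      have : -(K * g s) ≤ deriv g s := neg_le_of_abs_le hbs
      have hsum : 0 ≤ deriv g s + K * g s := by linarith
      exact mul_nonneg hsum (Real.exp_pos _).le
  -- u(s) = g s * exp(-K s) is antitone on [-T, T]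
  have hu : AntitoneOn (fun x => g x * Real.exp (-K * x)) (Set.Icc (-T) T) := by
    apply antitoneOn_of_deriv_nonpos (convex_Icc _ _)
    · exact (hg.continuous.mul (Real.continuous_exp.comp (continuous_const.mul continuous_id))).continuousOn
    · intro s hs
      exact ((hD (-K) s).differentiableAt).differentiableWithinAt
    · intro s hs
      rw [(hD (-K) s).deriv]
      have hbs := hb s (hint hs)
      have : deriv g s ≤ K * g s := le_of_abs_le hbs
      have hsum : deriv g s + (-K) * g s ≤ 0 := by linarith
      exact mul_nonpos_of_nonpos_of_nonneg hsum (Real.exp_pos _).le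
  intro t ht
  have ht' : t ∈ Set.Icc (-T) T := ⟨neg_le_of_abs_le ht, le_of_abs_le ht⟩
  have h0 : (0 : ℝ) ∈ Set.Icc (-T) T := ⟨by linarith, hT.le⟩
  have hexp : ∀ a : ℝ, Real.exp (a * (0:ℝ)) = 1 := by intro a; simp
  rcases le_or_gt 0 t with htpos | htneg
  · have habs : |t| = t := abs_of_nonneg htpos
    constructor
    · -- lower: v 0 ≤ v t
      have := hv h0 ht' htpos
      simp only [mul_zero, Real.exp_zero, mul_one] at this
      -- g 0 ≤ g t * exp (K t)
      have h2 : g 0 * Real.exp (-(K * t)) ≤ g t := by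
        rw [Real.exp_neg, ← div_eq_mul_inv, div_le_iff₀ (Real.exp_pos _)]
        exact this
      have : -(c * |t| * Real.sqrt (g 0)) = -(K * t) := by rw [habs, hKdef]; ring
      rw [this]; exact h2
    · -- upper: u t ≤ u 0
      have := hu h0 ht' htpos
      simp only [mul_zero, Real.exp_zero, mul_one] at this
      -- g t * exp (-K t) ≤ g 0
      have h2 : g t ≤ g 0 * Real.exp (K * t) := by
        rw [← div_le_iff₀ (Real.exp_pos (K * t)), div_eq_mul_inv, ← Real.exp_neg]
        simpa [neg_mul] using this
      have : c * |t| * Real.sqrt (g 0) = K * t := by rw [habs, hKdef]; ring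
      rw [this]; exact h2
  · have habs : |t| = -t := abs_of_neg htneg
    constructor
    · -- lower: u 0 ≤ u t
      have := hu ht' h0 htneg.le
      simp only [mul_zero, Real.exp_zero, mul_one] at this
      -- g 0 ≤ g t * exp(-K t)
      have h2 : g 0 * Real.exp (K * t) ≤ g t := by
        have h3 := mul_le_mul_of_nonneg_right this (Real.exp_pos (K * t)).le
        calc g 0 * Real.exp (K * t) ≤ g t * Real.exp (-K * t) * Real.exp (K * t) := h3
          _ = g t := by
              rw [mul_assoc, ← Real.exp_add]
              simp [neg_mul]
      have : -(c * |t| * Real.sqrt (g 0)) = K * t := by rw [habs, hKdef]; ring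
      rw [this]; exact h2
    · -- upper: v t ≤ v 0
      have := hv ht' h0 htneg.le
      simp only [mul_zero, Real.exp_zero, mul_one] at this
      -- g t * exp (K t) ≤ g 0
      have h2 : g t ≤ g 0 * Real.exp (-(K * t)) := by
        rw [Real.exp_neg, ← div_eq_mul_inv, le_div_iff₀ (Real.exp_pos _)]
        exact this
      have : c * |t| * Real.sqrt (g 0) = -(K * t) := by rw [habs, hKdef]; ring
      rw [this]; exact h2
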